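/- A subfamily of 𝒞 is a maximal system of pre-islands (with respect to inclusion, among all systems of pre-islands corresponding to (𝒞, 𝒦)) if and only if it is a maximal admissible family. -/

import Mathlib

open Finset

variable {U : Type*}

/-- `K` covers `S` in the poset `(𝒦, ⊆)`. -/
def Covers (𝒦 : Finset (Finset U)) (S K : Finset U) : Prop :=
  S ⊂ K ∧ ∀ K' ∈ 𝒦, S ⊂ K' → ¬K' ⊂ K

/-- `min h(K) < min h(S)` (for nonempty finite `S`, `K`). -/
def MinLt (h : U → ℝ) (K S : Finset U) : Prop :=
  ∃ k ∈ K, ∀ s ∈ S, h k < h s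

/-- `S` is a pre-island with respect to `(𝒞, 𝒦, h)`. -/
def IsPreIsland (𝒞 𝒦 : Finset (Finset U)) (h : U → ℝ) (S : Finset U) : Prop :=
  S ∈ 𝒞 ∧ S.Nonempty ∧ ∀ K ∈ 𝒦, Covers 𝒦 S K → MinLt h K S

/-- `S` is an island with respect to `(𝒞, 𝒦, h)`. -/
def IsIsland [DecidableEq U] (𝒞 𝒦 : Finset (Finset U)) (h : U → ℝ) (S : Finset U) : Prop :=
  S ∈ 𝒞 ∧ S.Nonempty ∧ ∀ K ∈ 𝒦, Covers 𝒦 S K → ∀ u ∈ K \ S, ∀ s ∈ S, h u < h s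

/-- `(𝒞, 𝒦)` is an island domain on `U`. -/
def IslandDomain [Fintype U] (𝒞 𝒦 : Finset (Finset U)) : Prop :=
  𝒞 ⊆ 𝒦 ∧ Finset.univ ∈ 𝒞

/-- `ℋ` is admissible with respect to `(𝒞, 𝒦)`. -/
def Admissible [DecidableEq U] [Fintype U] (𝒞 𝒦 ℋ : Finset (Finset U)) : Prop :=
  ℋ ⊆ 𝒞 ∧ (∅ : Finset U) ∉ ℋ ∧ Finset.univ ∈ ℋ ∧
    ∀ 𝒜 ⊆ ℋ, 𝒜.Nonempty → (∀ A ∈ 𝒜, ∀ B ∈ 𝒜, A ⊆ B → A = B) →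
      ∃ H ∈ 𝒜, ∀ K ∈ 𝒦, H ⊂ K → ¬K ⊆ 𝒜.sup id

/-- `𝒮` is the system of pre-islands corresponding to `(𝒞, 𝒦, h)` for some `h`. -/
def IsSystemOfPreIslands (𝒞 𝒦 𝒮 : Finset (Finset U)) : Prop :=
  ∃ h : U → ℝ, ∀ S, S ∈ 𝒮 ↔ IsPreIsland 𝒞 𝒦 h S

/-- `𝒮` is the system of islands corresponding to `(𝒞, 𝒦, h)` for some `h`. -/
def IsSystemOfIslands [DecidableEq U] (𝒞 𝒦 𝒮 : Finset (Finset U)) : Prop :=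
  ∃ h : U → ℝ, ∀ S, S ∈ 𝒮 ↔ IsIsland 𝒞 𝒦 h S

/-- `(𝒞, 𝒦)` is a connective island domain. -/
def Connective [DecidableEq U] (𝒞 𝒦 : Finset (Finset U)) : Prop :=
  ∀ A ∈ 𝒞, ∀ B ∈ 𝒞, (A ∩ B).Nonempty → ¬B ⊆ A → ∃ K ∈ 𝒦, A ⊂ K ∧ K ⊆ A ∪ B

/-- Any two members are comparable or disjoint. -/
def CDIndependent [DecidableEq U] (ℋ : Finset (Finset U)) : Prop :=
  ∀ A ∈ ℋ, ∀ B ∈ ℋ, A ⊆ B ∨ B ⊆ A ∨ A ∩ B = ∅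

def WeaklyIndependent [DecidableEq U] (ℋ : Finset (Finset U)) : Prop :=
  ∀ H ∈ ℋ, ∀ 𝒢 ⊆ ℋ, 𝒢.Nonempty → H ⊆ 𝒢.sup id → ∃ G ∈ 𝒢, H ⊆ G

def CDWIndependent [DecidableEq U] (ℋ : Finset (Finset U)) : Prop :=
  CDIndependent ℋ ∧ WeaklyIndependent ℋ

/-- The proximity relation `δ`: `A δ B` iff some `K ∈ 𝒦` with `A ⪯ K` meets `B`. -/
def Delta [DecidableEq U] (𝒦 : Finset (Finset U)) (A B : Finset U) : Prop :=
  ∃ K ∈ 𝒦, (K = A ∨ Covers 𝒦 A K) ∧ (K ∩ B).Nonempty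

def Distant [DecidableEq U] (𝒦 : Finset (Finset U)) (A B : Finset U) : Prop :=
  ¬Delta 𝒦 A B ∧ ¬Delta 𝒦 B A

/-- Any two incomparable members of `ℋ` are distant. -/
def DistantFamily [DecidableEq U] (𝒦 ℋ : Finset (Finset U)) : Prop :=
  ∀ A ∈ ℋ, ∀ B ∈ ℋ, ¬A ⊆ B → ¬B ⊆ A → Distant 𝒦 A B

/-- A proximity domain: connective and `δ` symmetric on nonempty members of `𝒞`. -/
def ProximityDomain [DecidableEq U] (𝒞 𝒦 : Finset (Finset U)) : Prop :=
  Connective 𝒞 𝒦 ∧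
    ∀ A ∈ 𝒞, ∀ B ∈ 𝒞, A.Nonempty → B.Nonempty → (Delta 𝒦 A B ↔ Delta 𝒦 B A)

section MyAux

variable [Fintype U] [DecidableEq U] [Nonempty U]

private lemma myExistsMinCover (𝒦 : Finset (Finset U)) {S K : Finset U} (hK : K ∈ 𝒦)
    (hSK : S ⊂ K) : ∃ K' ∈ 𝒦, K' ⊆ K ∧ Covers 𝒦 S K' := by
  classical
  have hne : (𝒦.filter fun K' => S ⊂ K' ∧ K' ⊆ K).Nonempty :=
    ⟨K, by simp [hK, hSK]⟩
  obtain ⟨m, hm, hmin⟩ : ∃ m ∈ (𝒦.filter fun K' => S ⊂ K' ∧ K' ⊆ K), ∀ x ∈ (𝒦.filter fun K' => S ⊂ K' ∧ K' ⊆ K), ¬x < m := by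
    obtain ⟨m, hm⟩ := Finset.exists_minimal hne
    exact ⟨m, hm.1, fun x hx hlt => hm.not_lt hx hlt⟩
  simp only [Finset.mem_filter] at hm
  refine ⟨m, hm.1, hm.2.2, hm.2.1, ?_⟩
  intro K'' hK'' hSK'' hlt
  exact hmin K'' (by simp [hK'', hSK'', hlt.subset.trans hm.2.2]) hlt

private lemma mySystemAdmissible {𝒞 𝒦 𝒮 : Finset (Finset U)} (hdom : IslandDomain 𝒞 𝒦)
    (hsys : IsSystemOfPreIslands 𝒞 𝒦 𝒮) : Admissible 𝒞 𝒦 𝒮 := by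
  obtain ⟨h, hiff⟩ := hsys
  refine ⟨fun S hS => ((hiff S).1 hS).1, ?_, ?_, ?_⟩
  · intro h0
    exact absurd ((hiff ∅).1 h0).2.1 (by simp)
  · refine (hiff _).2 ⟨hdom.2, univ_nonempty, fun K hK hc => ?_⟩
    exact absurd (subset_antisymm hc.1.subset (subset_univ K)) hc.1.ne
  · intro 𝒜 h𝒜 hne _hanti
    obtain ⟨A, hA⟩ := hne
    have hAne : A.Nonempty := ((hiff A).1 (h𝒜 hA)).2.1
    have hPne : (𝒜.sup id).Nonempty := hAne.mono (le_sup (f := id) hA)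
    obtain ⟨p, hp, hpmin⟩ := Finset.exists_min_image (𝒜.sup id) h hPne
    rw [Finset.mem_sup] at hp
    obtain ⟨H, hH𝒜, hpH⟩ := hp
    refine ⟨H, hH𝒜, fun K hK hHK hsub => ?_⟩
    obtain ⟨K', hK'𝒦, hK'K, hcov⟩ := myExistsMinCover 𝒦 hK hHK
    obtain ⟨k, hkK', hk⟩ := ((hiff H).1 (h𝒜 hH𝒜)).2.2 K' hK'𝒦 hcov
    have h1 : h k < h p := hk p hpH
    have h2 : h p ≤ h k := hpmin k (hsub (hK'K hkK'))
    linarith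

/-- `u` is a legal next point (lowest remaining) given the lower set `L`. -/
private def GoodPt (𝒦 ℋ : Finset (Finset U)) (L : Finset U) (u : U) : Prop :=
  u ∉ L ∧ ∀ S ∈ ℋ, (∃ K ∈ 𝒦, Covers 𝒦 S K ∧ K ∩ L = ∅) → u ∉ S

private lemma myExistsMaximalSuperset (F : Finset (Finset U)) {S : Finset U} (hS : S ∈ F) :
    ∃ M ∈ F, S ⊆ M ∧ ∀ T ∈ F, ¬M ⊂ T := by
  classical
  obtain ⟨M, hM, hmax⟩ : ∃ M ∈ (F.filter fun T => S ⊆ T), ∀ x ∈ (F.filter fun T => S ⊆ T), ¬M < x := by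
    obtain ⟨M, hM⟩ := Finset.exists_maximal (s := F.filter fun T => S ⊆ T) ⟨S, by simp [hS]⟩
    exact ⟨M, hM.1, fun x hx hlt => hM.not_gt hx hlt⟩
  simp only [Finset.mem_filter] at hM
  exact ⟨M, hM.1, hM.2, fun T hT hMT => hmax T (by simp [hT, hM.2.trans hMT.subset]) hMT⟩

private lemma myExistsGood {𝒞 𝒦 ℋ : Finset (Finset U)} (adm : Admissible 𝒞 𝒦 ℋ)
    {L : Finset U} (hL : L ≠ Finset.univ) : ∃ u, GoodPt 𝒦 ℋ L u := by
  classical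
  set 𝒮' := ℋ.filter (fun S => ∃ K ∈ 𝒦, Covers 𝒦 S K ∧ K ∩ L = ∅) with h𝒮'
  by_cases hcov : ∀ u, u ∈ L ∪ 𝒮'.sup id
  · exfalso
    have hne : 𝒮'.Nonempty := by
      rcases 𝒮'.eq_empty_or_nonempty with he | hn
      · exact absurd (eq_univ_of_forall fun u => by simpa [he] using hcov u) hL
      · exact hn
    set 𝒜 := 𝒮'.filter (fun S => ∀ T ∈ 𝒮', ¬S ⊂ T) with h𝒜
    have hsup : ∀ S ∈ 𝒮', ∃ M ∈ 𝒜, S ⊆ M := by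
      intro S hS
      obtain ⟨M, hM, hSM, hmax⟩ := myExistsMaximalSuperset 𝒮' hS
      exact ⟨M, Finset.mem_filter.2 ⟨hM, hmax⟩, hSM⟩
    have h𝒜ℋ : 𝒜 ⊆ ℋ := (Finset.filter_subset _ _).trans (Finset.filter_subset _ _)
    have hanti : ∀ A ∈ 𝒜, ∀ B ∈ 𝒜, A ⊆ B → A = B := by
      intro A hA B hB hAB
      by_contra hneq
      exact (Finset.mem_filter.1 hA).2 B (Finset.filter_subset _ _ hB)
        (Finset.ssubset_iff_subset_ne.2 ⟨hAB, hneq⟩)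
    obtain ⟨A, hA⟩ := hne
    obtain ⟨M, hM𝒜, _⟩ := hsup A hA
    obtain ⟨H, hH𝒜, hHgood⟩ := adm.2.2.2 𝒜 h𝒜ℋ ⟨M, hM𝒜⟩ hanti
    obtain ⟨K, hK𝒦, hcovK, hdisj⟩ := (Finset.mem_filter.1 (Finset.filter_subset _ _ hH𝒜 : H ∈ 𝒮')).2
    refine hHgood K hK𝒦 hcovK.1 ?_
    intro x hxK
    have hxL : x ∉ L := fun hxL => by
      have : x ∈ K ∩ L := Finset.mem_inter.2 ⟨hxK, hxL⟩
      simp [hdisj] at this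
    have hx : x ∈ 𝒮'.sup id := (Finset.mem_union.1 (hcov x)).resolve_left hxL
    rw [Finset.mem_sup] at hx
    obtain ⟨S, hS𝒮', hxS⟩ := hx
    obtain ⟨M', hM'𝒜, hSM'⟩ := hsup S hS𝒮'
    exact le_sup (f := id) hM'𝒜 (hSM' hxS)
  · push_neg at hcov
    obtain ⟨u, hu⟩ := hcov
    rw [Finset.mem_union, not_or] at hu
    refine ⟨u, hu.1, fun S hSℋ hw huS => hu.2 ?_⟩
    have hS𝒮' : S ∈ 𝒮' := Finset.mem_filter.2 ⟨hSℋ, hw⟩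
    exact le_sup (f := id) hS𝒮' huS

private noncomputable def nextPt (𝒦 ℋ : Finset (Finset U)) (L : Finset U) : U :=
  Classical.epsilon (GoodPt 𝒦 ℋ L)

private noncomputable def tower (𝒦 ℋ : Finset (Finset U)) : ℕ → Finset U
  | 0 => ∅
  | n + 1 =>
    if tower 𝒦 ℋ n = Finset.univ then Finset.univ
    else insert (nextPt 𝒦 ℋ (tower 𝒦 ℋ n)) (tower 𝒦 ℋ n)

private lemma tower_subset_succ (𝒦 ℋ : Finset (Finset U)) (n : ℕ) :
    tower 𝒦 ℋ n ⊆ tower 𝒦 ℋ (n + 1) := by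
  rw [tower]
  split
  · exact subset_univ _
  · exact Finset.subset_insert _ _

private lemma tower_mono (𝒦 ℋ : Finset (Finset U)) {n m : ℕ} (h : n ≤ m) :
    tower 𝒦 ℋ n ⊆ tower 𝒦 ℋ m := by
  induction m with
  | zero => simpa [Nat.le_zero.1 h] using Finset.Subset.refl _
  | succ m ih =>
    rcases Nat.lt_or_ge n (m + 1) with hlt | hge
    · exact (ih (Nat.lt_succ_iff.1 hlt)).trans (tower_subset_succ 𝒦 ℋ m)
    · have : n = m + 1 := le_antisymm h hge
      simp [this]

private lemma tower_growth {𝒞 𝒦 ℋ : Finset (Finset U)} (adm : Admissible 𝒞 𝒦 ℋ) (n : ℕ) :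
    tower 𝒦 ℋ n = Finset.univ ∨ n ≤ (tower 𝒦 ℋ n).card := by
  induction n with
  | zero => right; simp
  | succ n ih =>
    by_cases hu : tower 𝒦 ℋ n = Finset.univ
    · left; rw [tower, if_pos hu]
    · right
      have hgood : GoodPt 𝒦 ℋ (tower 𝒦 ℋ n) (nextPt 𝒦 ℋ (tower 𝒦 ℋ n)) :=
        Classical.epsilon_spec (myExistsGood adm hu)
      rw [tower, if_neg hu, Finset.card_insert_of_notMem hgood.1]
      exact Nat.succ_le_succ (ih.resolve_left hu)

private lemma tower_univ {𝒞 𝒦 ℋ : Finset (Finset U)} (adm : Admissible 𝒞 𝒦 ℋ) :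
    ∃ n, tower 𝒦 ℋ n = Finset.univ := by
  refine ⟨Fintype.card U + 1, ?_⟩
  rcases tower_growth adm (Fintype.card U + 1) with h | h
  · exact h
  · exact absurd (h.trans (Finset.card_le_univ _)) (by omega)

private lemma myAdmissibleSubsetSystem {𝒞 𝒦 ℋ : Finset (Finset U)} (hdom : IslandDomain 𝒞 𝒦)
    (adm : Admissible 𝒞 𝒦 ℋ) :
    ∃ 𝒮' : Finset (Finset U), IsSystemOfPreIslands 𝒞 𝒦 𝒮' ∧ ℋ ⊆ 𝒮' := by
  classical
  have hmem : ∀ u : U, ∃ n, u ∈ tower 𝒦 ℋ n := by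
    obtain ⟨n, hn⟩ := tower_univ adm
    exact fun u => ⟨n, by simp [hn]⟩
  set h : U → ℝ := fun u => (Nat.find (hmem u) : ℝ) with hh
  have key : ∀ S ∈ ℋ, IsPreIsland 𝒞 𝒦 h S := by
    intro S hS
    have hSne : S.Nonempty := by
      rcases S.eq_empty_or_nonempty with rfl | hn
      · exact absurd hS adm.2.1
      · exact hn
    refine ⟨adm.1 hS, hSne, ?_⟩
    intro K hK hcovK
    have hSK : S ⊆ K := hcovK.1.subset
    have hKex : ∃ n, (K ∩ tower 𝒦 ℋ n).Nonempty := by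
      obtain ⟨s, hs⟩ := hSne
      obtain ⟨n, hn⟩ := hmem s
      exact ⟨n, s, Finset.mem_inter.2 ⟨hSK hs, hn⟩⟩
    have hpos : 0 < Nat.find hKex := by
      refine Nat.pos_of_ne_zero fun h' => ?_
      have := Nat.find_spec hKex
      rw [h'] at this
      simp [tower] at this
    set m : ℕ := Nat.find hKex - 1 with hmdef
    have hm : Nat.find hKex = m + 1 := (Nat.succ_pred_eq_of_pos hpos).symm
    have hdisj : K ∩ tower 𝒦 ℋ m = ∅ := by
      have := Nat.find_min hKex (show m < Nat.find hKex by omega)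
      exact Finset.not_nonempty_iff_eq_empty.1 this
    have htm : tower 𝒦 ℋ m ≠ Finset.univ := by
      intro he
      rw [he] at hdisj
      simp at hdisj
      obtain ⟨s, hs⟩ := hSne
      exact (Finset.eq_empty_iff_forall_notMem.1 hdisj) s (hSK hs)
    have hgood : GoodPt 𝒦 ℋ (tower 𝒦 ℋ m) (nextPt 𝒦 ℋ (tower 𝒦 ℋ m)) :=
      Classical.epsilon_spec (myExistsGood adm htm)
    set k : U := nextPt 𝒦 ℋ (tower 𝒦 ℋ m) with hkdef
    have htsucc : tower 𝒦 ℋ (m + 1) = insert k (tower 𝒦 ℋ m) := by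
      rw [tower, if_neg htm]
    have hkK : k ∈ K := by
      have hspec := Nat.find_spec hKex
      rw [hm] at hspec
      obtain ⟨x, hx⟩ := hspec
      rw [Finset.mem_inter, htsucc, Finset.mem_insert] at hx
      rcases hx.2 with rfl | hxm
      · exact hx.1
      · exact absurd (Finset.mem_inter.2 ⟨hx.1, hxm⟩) (by simp [hdisj])
    have hkS : k ∉ S := hgood.2 S hS ⟨K, hK, hcovK, hdisj⟩
    refine ⟨k, hkK, ?_⟩
    intro s hsS
    have hk_le : Nat.find (hmem k) ≤ m + 1 :=
      Nat.find_min' (hmem k) (by rw [htsucc]; exact Finset.mem_insert_self _ _)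
    have hs_gt : m + 1 < Nat.find (hmem s) := by
      by_contra hle
      push_neg at hle
      have hsmem : s ∈ tower 𝒦 ℋ (m + 1) :=
        tower_mono 𝒦 ℋ hle (Nat.find_spec (hmem s))
      rw [htsucc, Finset.mem_insert] at hsmem
      rcases hsmem with rfl | hsm
      · exact hkS hsS
      · exact absurd (Finset.mem_inter.2 ⟨hSK hsS, hsm⟩) (by simp [hdisj])
    have : Nat.find (hmem k) < Nat.find (hmem s) := lt_of_le_of_lt hk_le hs_gt
    simp only [hh]
    exact_mod_cast this
  refine ⟨𝒞.filter (fun S => IsPreIsland 𝒞 𝒦 h S), ⟨h, ?_⟩, ?_⟩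
  · intro S
    rw [Finset.mem_filter]
    exact ⟨fun hx => hx.2, fun hx => ⟨hx.1, hx⟩⟩
  · intro S hSℋ
    exact Finset.mem_filter.2 ⟨adm.1 hSℋ, key S hSℋ⟩

end MyAux

/-- maximal systems of pre-islands = maximal admissible families. -/
theorem maximal_system_iff_maximal_admissible [Fintype U] [DecidableEq U] [Nonempty U]
    (𝒞 𝒦 𝒮 : Finset (Finset U)) (hdom : IslandDomain 𝒞 𝒦) (h𝒮 : 𝒮 ⊆ 𝒞) :
    (IsSystemOfPreIslands 𝒞 𝒦 𝒮 ∧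
        ∀ 𝒮' : Finset (Finset U), IsSystemOfPreIslands 𝒞 𝒦 𝒮' → 𝒮 ⊆ 𝒮' → 𝒮 = 𝒮') ↔
      (Admissible 𝒞 𝒦 𝒮 ∧
        ∀ ℋ : Finset (Finset U), Admissible 𝒞 𝒦 ℋ → 𝒮 ⊆ ℋ → 𝒮 = ℋ) := by
  constructor
  · rintro ⟨hsys, hmax⟩
    refine ⟨mySystemAdmissible hdom hsys, ?_⟩
    intro ℋ hadm hsub
    obtain ⟨𝒮', hsys', hsub'⟩ := myAdmissibleSubsetSystem hdom hadm
    have h1 : 𝒮 = 𝒮' := hmax 𝒮' hsys' (hsub.trans hsub')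
    refine subset_antisymm hsub ?_
    rw [h1]
    exact hsub'
  · rintro ⟨hadm, hmax⟩
    obtain ⟨𝒮₀, hsys₀, hsub₀⟩ := myAdmissibleSubsetSystem hdom hadm
    have h0 : 𝒮 = 𝒮₀ := hmax 𝒮₀ (mySystemAdmissible hdom hsys₀) hsub₀
    constructor
    · rw [h0]; exact hsys₀
    · intro 𝒮'' hsys'' hsub''
      exact hmax 𝒮'' (mySystemAdmissible hdom hsys'') hsub''
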